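/- Let N ≥ 1, let ω ⊆ ℝᴺ be a Lebesgue-measurable set, let T > 0, c ∈ (0,1], and K, M, κ > 0. Let u : [0,T] → L²(ℝᴺ) be continuously differentiable with derivative z = u', and assume: (i) ‖z(t)‖_{L²(ℝᴺ)} ≤ K · M^{1 − c t/T} · ‖z(T)‖_{L²(ℝᴺ)}^{c t/T} for all t ∈ [0,T]; (ii) ‖z(T)‖²_{L²(ℝᴺ)} ≤ κ² ∫₀ᵀ ‖z(t)‖²_{L²(ω)} dt; (iii) ‖u(T)‖²_{L²(ℝᴺ)} ≤ κ² ∫₀ᵀ ‖u(t)‖²_{L²(ω)} dt. Then there exist positive constants C, C₁ and δ (depending only on T, c, K, M, κ) such that whenever the quantity 𝔑 := ( ∫₀ᵀ ‖u(t)‖²_{L²(ω)} dt + ∫₀ᵀ ‖z(t)‖²_{L²(ω)} dt )^{1/2} satisfies 0 < C₁·𝔑 < δ, one has ‖u(0)‖_{L²(ℝᴺ)} ≤ −C / log( C₁·𝔑 ). -/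

import Mathlib

open MeasureTheory intervalIntegral

set_option maxHeartbeats 1000000 in
/-- Conditional logarithmic stability: if `u : [0,T] → L²(ℝᴺ)` is continuously
differentiable with derivative `z`, `z` satisfies the logarithmic convexity bound (i),
and `z`, `u` satisfy the final-state observability inequalities (ii), (iii) from `ω`,
then `‖u(0)‖ ≤ −C / log(C₁ 𝔑)` whenever the observation norm
`𝔑 = (∫₀ᵀ ‖u‖²_{L²(ω)} + ∫₀ᵀ ‖z‖²_{L²(ω)})^{1/2}` is small, with constants
depending only on `(T, c, K, M, κ)`. -/
theorem stmt12 (T c K M κ : ℝ) (hT : 0 < T) (hc : c ∈ Set.Ioc (0 : ℝ) 1)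
    (hK : 0 < K) (hM : 0 < M) (hκ : 0 < κ) :
    ∃ C C₁ δ : ℝ, 0 < C ∧ 0 < C₁ ∧ 0 < δ ∧
      ∀ (N : ℕ), 1 ≤ N → ∀ ω : Set (Fin N → ℝ), MeasurableSet ω →
        ∀ u z : ℝ → Lp ℂ 2 (volume : Measure (Fin N → ℝ)),
          (∀ t ∈ Set.Icc (0 : ℝ) T, HasDerivWithinAt u (z t) (Set.Icc (0 : ℝ) T) t) →
          ContinuousOn z (Set.Icc (0 : ℝ) T) →
          (∀ t ∈ Set.Icc (0 : ℝ) T,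
            ‖z t‖ ≤ K * M ^ (1 - c * t / T) * ‖z T‖ ^ (c * t / T)) →
          ‖z T‖ ^ 2 ≤ κ ^ 2 *
            (∫ t in (0:ℝ)..T, ∫ x in ω, ‖(z t : (Fin N → ℝ) → ℂ) x‖ ^ 2) →
          ‖u T‖ ^ 2 ≤ κ ^ 2 *
            (∫ t in (0:ℝ)..T, ∫ x in ω, ‖(u t : (Fin N → ℝ) → ℂ) x‖ ^ 2) →
          ∀ obsNorm : ℝ,
            obsNorm = ((∫ t in (0:ℝ)..T, ∫ x in ω, ‖(u t : (Fin N → ℝ) → ℂ) x‖ ^ 2) +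
              (∫ t in (0:ℝ)..T, ∫ x in ω, ‖(z t : (Fin N → ℝ) → ℂ) x‖ ^ 2)) ^ ((1:ℝ)/2) →
            0 < C₁ * obsNorm → C₁ * obsNorm < δ →
            ‖u 0‖ ≤ -C / Real.log (C₁ * obsNorm) := by
  obtain ⟨hc0, hc1⟩ := hc
  have hM' : (0:ℝ) < max M 1 := lt_max_of_lt_right one_pos
  refine ⟨1 + K * max M 1 * T / c, κ + 1, 1/2, by positivity, by positivity, by norm_num,
    ?_⟩
  intro N hN ω hω u z hderiv hzcont hlog hzobs huobs n hn hmpos hmlt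
  set A := ∫ t in (0:ℝ)..T, ∫ x in ω, ‖(u t : (Fin N → ℝ) → ℂ) x‖ ^ 2 with hA
  set B := ∫ t in (0:ℝ)..T, ∫ x in ω, ‖(z t : (Fin N → ℝ) → ℂ) x‖ ^ 2 with hB
  clear_value A B
  have hA0 : 0 ≤ A := by
    rw [hA]
    exact intervalIntegral.integral_nonneg hT.le fun t _ =>
      integral_nonneg fun x => by positivity
  have hB0 : 0 ≤ B := by
    rw [hB]
    exact intervalIntegral.integral_nonneg hT.le fun t _ =>
      integral_nonneg fun x => by positivity
  have hAB : (0:ℝ) ≤ A + B := by linarith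
  have hn0 : 0 < n := by
    by_contra h
    push_neg at h
    nlinarith [hmpos, hκ]
  set m := (κ + 1) * n with hm
  clear_value m
  have hm0 : 0 < m := hmpos
  have hm1 : m < 1 := by
    have : m < 1/2 := hmlt
    linarith
  have hn2 : n ^ 2 = A + B := by
    rw [hn, ← Real.rpow_natCast ((A + B) ^ ((1:ℝ)/2)) 2, ← Real.rpow_mul hAB]
    norm_num
  -- final state bounds
  have hE : ‖z T‖ ≤ m := by
    have h1 : ‖z T‖ ^ 2 ≤ m ^ 2 := by
      have : κ ^ 2 * B ≤ m ^ 2 := by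
        rw [hm, mul_pow, hn2]
        nlinarith [hκ.le, hn0.le, hA0, hB0]
      linarith [hzobs]
    nlinarith [norm_nonneg (z T), hm0]
  have hU : ‖u T‖ ≤ m := by
    have h1 : ‖u T‖ ^ 2 ≤ m ^ 2 := by
      have : κ ^ 2 * A ≤ m ^ 2 := by
        rw [hm, mul_pow, hn2]
        nlinarith [hκ.le, hn0.le, hA0, hB0]
      linarith [huobs]
    nlinarith [norm_nonneg (u T), hm0]
  -- logarithm quantities
  have hlogm : Real.log m < 0 := Real.log_neg hm0 hm1
  set L := -Real.log m with hL
  clear_value L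
  have hL0 : 0 < L := by rw [hL]; linarith
  set a := c * Real.log m / T with ha
  clear_value a
  have ha0 : a < 0 := by
    rw [ha]; exact div_neg_of_neg_of_pos (mul_neg_of_pos_of_neg hc0 hlogm) hT
  -- FTC
  have hucont : ContinuousOn u (Set.Icc 0 T) := fun t ht => (hderiv t ht).continuousWithinAt
  have hzint : IntervalIntegrable z volume 0 T := by
    apply ContinuousOn.intervalIntegrable
    rwa [Set.uIcc_of_le hT.le]
  have hftc : ∫ t in (0:ℝ)..T, z t = u T - u 0 := by
    apply intervalIntegral.integral_eq_sub_of_hasDeriv_right_of_le hT.le hucont ?_ hzint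
    intro x hx
    apply (hderiv x ⟨hx.1.le, hx.2.le⟩).mono_of_mem_nhdsWithin
    have h1 : Set.Ioo x T ∈ nhdsWithin x (Set.Ioi x) :=
      Ioo_mem_nhdsGT hx.2
    exact Filter.mem_of_superset h1 fun y hy => ⟨le_trans hx.1.le hy.1.le, hy.2.le⟩
  have hu0 : ‖u 0‖ ≤ ‖u T‖ + ∫ t in (0:ℝ)..T, ‖z t‖ := by
    have h2 : u 0 = u T - ∫ t in (0:ℝ)..T, z t := by rw [hftc]; abel
    calc ‖u 0‖ = ‖u T - ∫ t in (0:ℝ)..T, z t‖ := by rw [← h2]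
      _ ≤ ‖u T‖ + ‖∫ t in (0:ℝ)..T, z t‖ := norm_sub_le _ _
      _ ≤ ‖u T‖ + ∫ t in (0:ℝ)..T, ‖z t‖ := by
          exact add_le_add_right (intervalIntegral.norm_integral_le_integral_norm hT.le) _
  -- pointwise bound on ‖z t‖
  have hzbound : ∀ t ∈ Set.Icc (0:ℝ) T, ‖z t‖ ≤ K * max M 1 * Real.exp (a * t) := by
    intro t ht
    have ht0 : 0 ≤ t := ht.1
    have htT : t ≤ T := ht.2
    have hs0 : 0 ≤ c * t / T := by positivity
    have hs1 : c * t / T ≤ 1 := by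
      rw [div_le_one hT]; nlinarith
    have hMle : M ^ (1 - c * t / T) ≤ max M 1 := by
      rcases le_total M 1 with h | h
      · exact (Real.rpow_le_one hM.le h (by linarith)).trans (le_max_right _ _)
      · calc M ^ (1 - c * t / T) ≤ M ^ (1:ℝ) :=
              Real.rpow_le_rpow_of_exponent_le h (by linarith)
          _ = M := Real.rpow_one M
          _ ≤ max M 1 := le_max_left _ _
    have hEm : ‖z T‖ ^ (c * t / T) ≤ m ^ (c * t / T) :=
      Real.rpow_le_rpow (norm_nonneg _) hE hs0
    have heq : m ^ (c * t / T) = Real.exp (a * t) := by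
      rw [Real.rpow_def_of_pos hm0, ha]
      congr 1
      field_simp
    calc ‖z t‖ ≤ K * M ^ (1 - c * t / T) * ‖z T‖ ^ (c * t / T) := hlog t ht
      _ ≤ K * max M 1 * Real.exp (a * t) := by
          rw [← heq]
          apply mul_le_mul (mul_le_mul le_rfl hMle (Real.rpow_nonneg hM.le _) hK.le) hEm
            (Real.rpow_nonneg (norm_nonneg _) _) (by positivity)
  -- integral of the exponential
  have hexp_cont : Continuous fun t : ℝ => Real.exp (a * t) :=
    Real.continuous_exp.comp (continuous_const.mul continuous_id)
  have hexpd : ∀ t ∈ Set.uIcc (0:ℝ) T,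
      HasDerivAt (fun s => Real.exp (a * s) / a) (Real.exp (a * t)) t := by
    intro t _
    have h1 : HasDerivAt (fun s : ℝ => a * s) a t := by
      simpa using (hasDerivAt_id t).const_mul a
    have h2 := (h1.exp).div_const a
    simpa [mul_div_assoc, mul_div_cancel_right₀ _ (ne_of_lt ha0)] using h2
  have hexpint : ∫ t in (0:ℝ)..T, Real.exp (a * t) ≤ T / (c * L) := by
    have hcomp : ∫ t in (0:ℝ)..T, Real.exp (a * t)
        = Real.exp (a * T) / a - Real.exp (a * 0) / a :=
      intervalIntegral.integral_eq_sub_of_hasDerivAt hexpd (hexp_cont.intervalIntegrable 0 T)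
    have hval : T / (c * L) = -1 / a := by
      rw [ha, hL]
      field_simp
    rw [hcomp, hval]
    have h1 : Real.exp (a * T) / a ≤ 0 :=
      div_nonpos_of_nonneg_of_nonpos (Real.exp_nonneg _) ha0.le
    have h2 : Real.exp (a * 0) / a = 1 / a := by norm_num
    rw [h2]
    have : -(1 / a) = -1 / a := by ring
    linarith
  -- combine
  have hint1 : IntervalIntegrable (fun t => ‖z t‖) volume 0 T := by
    apply ContinuousOn.intervalIntegrable
    rw [Set.uIcc_of_le hT.le]
    exact hzcont.norm
  have hint2 : IntervalIntegrable (fun t => K * max M 1 * Real.exp (a * t)) volume 0 T :=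
    ((continuous_const.mul hexp_cont).intervalIntegrable 0 T)
  have hzi : ∫ t in (0:ℝ)..T, ‖z t‖ ≤ K * max M 1 * (T / (c * L)) := by
    calc ∫ t in (0:ℝ)..T, ‖z t‖
        ≤ ∫ t in (0:ℝ)..T, K * max M 1 * Real.exp (a * t) :=
          intervalIntegral.integral_mono_on hT.le hint1 hint2 hzbound
      _ = K * max M 1 * ∫ t in (0:ℝ)..T, Real.exp (a * t) := by
          rw [← intervalIntegral.integral_const_mul]
      _ ≤ K * max M 1 * (T / (c * L)) := by
          apply mul_le_mul_of_nonneg_left hexpint (by positivity)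
  -- m ≤ 1 / L
  have hmL : m ≤ 1 / L := by
    rw [le_div_iff₀ hL0]
    have h1 : Real.log m⁻¹ ≤ m⁻¹ - 1 := Real.log_le_sub_one_of_pos (by positivity)
    rw [Real.log_inv] at h1
    have h2 : m * L ≤ m * (m⁻¹ - 1) := by
      apply mul_le_mul_of_nonneg_left _ hm0.le
      rw [hL]; linarith
    have h3 : m * (m⁻¹ - 1) = 1 - m := by
      field_simp
    nlinarith
  have hfin : -(1 + K * max M 1 * T / c) / Real.log m
      = 1 / L + K * max M 1 * (T / (c * L)) := by
    have h1 : Real.log m = -L := by rw [hL]; ring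
    rw [h1, neg_div_neg_eq]
    field_simp
  calc ‖u 0‖ ≤ ‖u T‖ + ∫ t in (0:ℝ)..T, ‖z t‖ := hu0
    _ ≤ m + K * max M 1 * (T / (c * L)) := add_le_add hU hzi
    _ ≤ 1 / L + K * max M 1 * (T / (c * L)) := add_le_add_left hmL _
    _ = -(1 + K * max M 1 * T / c) / Real.log m := hfin.symm
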